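/- Let p > q be primes with p ≢ 1 (mod q). Then every skew brace of order pq is trivial; i.e., there is exactly one skew brace of order pq up to isomorphism, namely the trivial skew brace on ℤ_{pq} with a + b = a ∘ b. -/

import Mathlib

/-- `(op, e, inv)` is a group structure on `A`. -/
def IsGroupOp {A : Type*} (op : A → A → A) (e : A) (inv : A → A) : Prop :=
  (∀ a b c, op (op a b) c = op a (op b c)) ∧ (∀ a, op e a = a) ∧ (∀ a, op a e = a) ∧
  (∀ a, op (inv a) a = e) ∧ (∀ a, op a (inv a) = e)

/-- `(A, add, mul)` is a skew left brace: both operations are group operations and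
`a ∘ (b + c) = (a ∘ b - a) + a ∘ c`. -/
def IsSkewBrace {A : Type*} (add : A → A → A) (zero : A) (neg : A → A)
    (mul : A → A → A) (one : A) (inv : A → A) : Prop :=
  IsGroupOp add zero neg ∧ IsGroupOp mul one inv ∧
  ∀ a b c, mul a (add b c) = add (add (mul a b) (neg a)) (mul a c)

open Subgroup

lemma sylowAux {r s : ℕ} (hr : r.Prime) (hs : s.Prime) (hne : r ≠ s)
    (hmod : s % r ≠ 1) {G : Type*} [Group G] [Finite G] (hG : Nat.card G = r * s)
    (P : Sylow r G) : Nat.card P = r ∧ (P : Subgroup G).Normal := by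
  have : Fact r.Prime := ⟨hr⟩
  have hcardP : Nat.card P = r := by
    rw [Sylow.card_eq_multiplicity, hG, Nat.factorization_mul hr.pos.ne' hs.pos.ne']
    simp [hr.factorization, hs.factorization, Finsupp.single_apply, hne, (Ne.symm hne)]
  refine ⟨hcardP, ?_⟩
  have hindex : (P : Subgroup G).index = s := by
    have h1 := Subgroup.card_mul_index (P : Subgroup G)
    rw [hG] at h1
    rw [show Nat.card (P : Subgroup G) = r from hcardP] at h1
    exact Nat.eq_of_mul_eq_mul_left hr.pos h1
  have hdvd : Nat.card (Sylow r G) ∣ s := hindex ▸ Sylow.card_dvd_index P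
  have hone : Nat.card (Sylow r G) = 1 := by
    rcases (Nat.dvd_prime hs).mp hdvd with h | h
    · exact h
    · exfalso
      have hmc := card_sylow_modEq_one r G
      rw [h] at hmc
      have : s % r = 1 % r := hmc
      rw [Nat.one_mod_eq_one.mpr hr.one_lt.ne'] at this
      exact hmod this
  have hsub : Subsingleton (Sylow r G) :=
    (Nat.card_eq_one_iff_unique.mp hone).1
  rw [← Subgroup.normalizer_eq_top_iff]
  rw [eq_top_iff]
  intro g _
  exact Sylow.smul_eq_iff_mem_normalizer.mp (Subsingleton.elim _ _)

lemma cyclicAux {p q : ℕ} (hp : p.Prime) (hq : q.Prime) (hlt : q < p)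
    (hmod : p % q ≠ 1) {G : Type*} [Group G] (hG : Nat.card G = p * q) :
    IsCyclic G := by
  have : Fact p.Prime := ⟨hp⟩
  have : Fact q.Prime := ⟨hq⟩
  have hne : p ≠ q := hlt.ne'
  have : Finite G := Nat.finite_of_card_ne_zero (by rw [hG]; exact Nat.mul_ne_zero hp.pos.ne' hq.pos.ne')
  obtain ⟨P⟩ : Nonempty (Sylow p G) := inferInstance
  obtain ⟨Q⟩ : Nonempty (Sylow q G) := inferInstance
  have hqp : q % p ≠ 1 := by
    rw [Nat.mod_eq_of_lt hlt]
    exact fun hq1 => Nat.Prime.one_lt hq |>.ne' (by omega)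
  obtain ⟨hPcard, hPn⟩ := sylowAux hp hq hne hqp hG P
  obtain ⟨hQcard, hQn⟩ := sylowAux hq hp hne.symm hmod (by rw [hG, mul_comm]) Q
  have hPc : IsCyclic (P : Subgroup G) := isCyclic_of_prime_card (p := p) hPcard
  have hQc : IsCyclic (Q : Subgroup G) := isCyclic_of_prime_card (p := q) hQcard
  obtain ⟨x, hx⟩ := hPc.exists_generator
  obtain ⟨y, hy⟩ := hQc.exists_generator
  have hxo : orderOf (x : G) = p := by
    rw [show ((x : G)) = (P : Subgroup G).subtype x from rfl,
      orderOf_injective (P : Subgroup G).subtype (Subgroup.subtype_injective _) x,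
      orderOf_eq_card_of_forall_mem_zpowers hx, hPcard]
  have hyo : orderOf (y : G) = q := by
    rw [show ((y : G)) = (Q : Subgroup G).subtype y from rfl,
      orderOf_injective (Q : Subgroup G).subtype (Subgroup.subtype_injective _) y,
      orderOf_eq_card_of_forall_mem_zpowers hy, hQcard]
  have hdisj : Disjoint (P : Subgroup G) (Q : Subgroup G) :=
    IsPGroup.disjoint_of_ne p q hne _ _ P.isPGroup' Q.isPGroup'
  have hcomm : Commute (x : G) (y : G) :=
    Subgroup.commute_of_normal_of_disjoint _ _ hPn hQn hdisj x y x.2 y.2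
  have hord : orderOf ((x : G) * y) = p * q := by
    rw [hcomm.orderOf_mul_eq_mul_orderOf_of_coprime]
    · rw [hxo, hyo]
    · rw [hxo, hyo]; exact (Nat.coprime_primes hp hq).mpr hne
  exact isCyclic_of_orderOf_eq_card _ (by rw [hord, hG])


/-- Let `p > q` be primes with `p ≢ 1 (mod q)`.  Then every skew brace of order `pq` is
trivial (the two operations coincide) and its group is cyclic of order `pq`: up to
isomorphism there is exactly one skew brace of order `pq`, the trivial one on `ℤ_{pq}`. -/
theorem stmt11 (p q : ℕ) (hp : p.Prime) (hq : q.Prime) (hlt : q < p)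
    (hmod : p % q ≠ 1)
    {A : Type*} (add : A → A → A) (zero : A) (neg : A → A)
    (mul : A → A → A) (one : A) (inv : A → A)
    (h : IsSkewBrace add zero neg mul one inv)
    (hcard : Nat.card A = p * q) :
    (∀ a b : A, mul a b = add a b) ∧
    (∃ e : A ≃ ZMod (p * q), ∀ a b : A, e (add a b) = e a + e b) := by
  obtain ⟨⟨aassoc, azero, _, aneg, _⟩, ⟨massoc, mone, _, minv, _⟩, hdist⟩ := h
  letI : Add A := ⟨add⟩
  letI : Zero A := ⟨zero⟩
  letI : Neg A := ⟨neg⟩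
  letI : AddGroup A := AddGroup.ofLeftAxioms aassoc azero aneg
  letI : Mul A := ⟨mul⟩
  letI : One A := ⟨one⟩
  letI : Inv A := ⟨inv⟩
  letI : Group A := Group.ofLeftAxioms massoc mone minv
  have hdist' : ∀ a b c : A, a * (b + c) = (a * b + -a) + a * c := hdist
  -- a * 0 = a
  have ha0 : ∀ a : A, a * (0 : A) = a := by
    intro a
    have h1 := hdist' a 0 0
    rw [add_zero, add_assoc] at h1
    have h2 : a * (0:A) + (0:A) = a * 0 + (-a + a * 0) := by rw [add_zero]; exact h1
    have h3 : (0:A) = -a + a * 0 := add_left_cancel h2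
    exact (neg_add_eq_zero.mp h3.symm).symm
  -- 1 = 0
  have h10 : (1 : A) = 0 := by
    have h1 := hdist' 1 0 0
    rw [add_zero, one_mul] at h1
    have h2 : -(1:A) = 0 := by simpa using h1.symm
    simpa using congrArg Neg.neg h2
  -- a * (-b)
  have hneg : ∀ a b : A, a * (-b) = -(a * b + -a) + a := by
    intro a b
    have h1 : (a * b + -a) + a * (-b) = a := by
      rw [← hdist' a b (-b), add_neg_cancel, ha0]
    calc a * (-b) = -(a*b + -a) + ((a*b + -a) + a*(-b)) := (neg_add_cancel_left _ _).symm
      _ = -(a*b + -a) + a := by rw [h1]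
  set L : A → A → A := fun a b => -a + a * b with hL
  have hLadd : ∀ a b c : A, L a (b + c) = L a b + L a c := by
    intro a b c
    simp only [hL, hdist' a b c, add_assoc]
  have hLmul : ∀ a b c : A, L (a * b) c = L a (L b c) := by
    intro a b c
    simp only [hL]
    rw [hdist' a (-b) (b * c), hneg a b, ← mul_assoc a b c]
    rw [neg_add_rev, neg_neg]
    simp [add_assoc]
  have hLone : ∀ b : A, L 1 b = b := by
    intro b
    simp only [hL]
    rw [one_mul, h10, neg_zero, zero_add]
  let Lequiv : A → (A ≃+ A) := fun a =>
    { toFun := L a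
      invFun := fun c => a⁻¹ * (a + c)
      left_inv := fun b => by
        simp only [hL, add_neg_cancel_left, inv_mul_cancel_left]
      right_inv := fun c => by
        simp only [hL, mul_inv_cancel_left, neg_add_cancel_left]
      map_add' := hLadd a }
  let φ : A →* Multiplicative (AddAut A) :=
    { toFun := fun a => Multiplicative.ofAdd (Lequiv a)
      map_one' := by
        change Lequiv 1 = 0
        ext b
        exact hLone b
      map_mul' := fun a b => by
        change Lequiv (a * b) = Lequiv a + Lequiv b
        ext c
        exact hLmul a b c }
  have hfin : Finite A := Nat.finite_of_card_ne_zero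
    (by rw [hcard]; exact Nat.mul_ne_zero hp.pos.ne' hq.pos.ne')
  have hMcard : Nat.card (Multiplicative A) = p * q := by
    rw [← hcard]; exact Nat.card_congr Multiplicative.toAdd
  have hMcyc : IsCyclic (Multiplicative A) := cyclicAux hp hq hlt hmod hMcard
  have hcyc : IsAddCyclic A := isCyclic_multiplicative_iff.mp hMcyc
  have e0 : ZMod (Nat.card A) ≃+ A := zmodAddCyclicAddEquiv hcyc
  have e : A ≃+ ZMod (p * q) := hcard ▸ e0.symm
  have hAut : Nat.card (AddAut A) = Nat.totient (p * q) := by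
    have : NeZero (p * q) := ⟨Nat.mul_ne_zero hp.pos.ne' hq.pos.ne'⟩
    calc Nat.card (AddAut A) = Nat.card (AddAut (ZMod (p * q))) :=
          Nat.card_congr (AddAut.congr e).toEquiv
      _ = Nat.card ((ZMod (p * q))ˣ) := Nat.card_congr (ZMod.AddAutEquivUnits _).toEquiv
      _ = Nat.totient (p * q) := by
          rw [Nat.card_eq_fintype_card, ZMod.card_units_eq_totient]
  have hcop : Nat.Coprime (p * q) (Nat.totient (p * q)) := by
    have hcpq : Nat.Coprime p q := (Nat.coprime_primes hp hq).mpr hlt.ne'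
    rw [Nat.totient_mul hcpq, Nat.totient_prime hp, Nat.totient_prime hq]
    have hq2 : 2 ≤ q := hq.two_le
    have hp2 : 2 ≤ p := hp.two_le
    rw [Nat.coprime_mul_iff_left]
    constructor
    · rw [hp.coprime_iff_not_dvd]
      intro hdvd
      rcases (Nat.Prime.dvd_mul hp).mp hdvd with h' | h'
      · exact absurd (Nat.le_of_dvd (by omega) h') (by omega)
      · exact absurd (Nat.le_of_dvd (by omega) h') (by omega)
    · rw [hq.coprime_iff_not_dvd]
      intro hdvd
      rcases (Nat.Prime.dvd_mul hq).mp hdvd with h' | h'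
      · have h1 : (1 : ℕ) ≡ p [MOD q] := (Nat.modEq_iff_dvd' (by omega)).mpr h'
        have h2 : p % q = 1 % q := h1.symm
        rw [Nat.mod_eq_of_lt hq.one_lt] at h2
        exact hmod h2
      · exact absurd (Nat.le_of_dvd (by omega) h') (by omega)
  have key : ∀ a : A, φ a = 1 := by
    intro a
    have h1 : orderOf (φ a) ∣ p * q := by
      refine (orderOf_map_dvd φ a).trans ?_
      rw [← hcard]; exact orderOf_dvd_natCard a
    have h2 : orderOf (φ a) ∣ Nat.totient (p * q) := by
      rw [← hAut]; exact orderOf_dvd_natCard (φ a)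
    have : orderOf (φ a) = 1 := Nat.dvd_one.mp (hcop ▸ Nat.dvd_gcd h1 h2)
    exact orderOf_eq_one_iff.mp this
  have htriv : ∀ a b : A, a * b = a + b := by
    intro a b
    have h1 : (Multiplicative.toAdd (φ a)) b = b := by rw [key a]; rfl
    have h2 : -a + a * b = b := h1
    calc a * b = a + (-a + a * b) := (add_neg_cancel_left _ _).symm
      _ = a + b := by rw [h2]
  exact ⟨htriv, ⟨e.toEquiv, fun a b => e.map_add a b⟩⟩
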